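/- Reciprocity for poly-Dedekind sums: for relatively prime positive integers h, m, positive integer p, and integer k, h m^p S_p^{(k)}(h,m) + m h^p S_p^{(k)}(m,h) = \sum_{\mu=0}^{m-1} \sum_{j=0}^{p} \sum_{\nu=0}^{h-1} \sum_{l=1}^{p-j+1} ((mh)^{j-1} \binom{p}{j} S_1(p-j+1,l) / ((p-j+1) l^{k-1})) \cdot (\mu h m^{p-j} + m \nu h^{p-j}) \overline{B}_j(\nu/h + \mu/m). -/

import Mathlib

noncomputable section

/-- Signed Stirling numbers of the first kind. -/
def stirling1 : ℕ → ℕ → ℤ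
  | 0, 0 => 1
  | 0, _ + 1 => 0
  | _ + 1, 0 => 0
  | n + 1, m + 1 => stirling1 n m - n * stirling1 n (m + 1)

/-- `n!`-normalized coefficients of `Ei_k (log (1+t))`. -/
def polyExpCoeff (k : ℤ) (n : ℕ) : ℚ :=
  ∑ m ∈ Finset.Icc 1 n, (stirling1 n m : ℚ) / (m : ℚ) ^ (k - 1)

/-- Type 2 poly-Bernoulli numbers of index `k`, defined by the recursion coming from the
generating function `Ei_k (log (1+t)) / (e^t - 1) = ∑ B_n^{(k)} t^n/n!`. -/
def polyBernoulli (k : ℤ) : ℕ → ℚ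
  | n =>
    (polyExpCoeff k (n + 1) -
      ∑ l ∈ (Finset.range n).attach, ((n + 1).choose l.1 : ℚ) * polyBernoulli k l.1) / (n + 1)
  termination_by n => n
  decreasing_by exact Finset.mem_range.mp l.2

/-- Type 2 poly-Bernoulli polynomials of index `k`, as functions on `ℝ`. -/
def polyBernoulliPoly (k : ℤ) (n : ℕ) (x : ℝ) : ℝ :=
  ∑ l ∈ Finset.range (n + 1), (n.choose l : ℝ) * (polyBernoulli k l : ℝ) * x ^ (n - l)

/-- Bernoulli polynomials as functions on `ℝ`. -/
def bernoulliPolyFun (n : ℕ) (x : ℝ) : ℝ :=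
  ∑ l ∈ Finset.range (n + 1), (n.choose l : ℝ) * (bernoulli l : ℝ) * x ^ (n - l)

/-- Bernoulli functions `B̄_n(x) = B_n(⟨x⟩)`. -/
def bernoulliBar (n : ℕ) (x : ℝ) : ℝ := bernoulliPolyFun n (Int.fract x)

/-- Type 2 poly-Bernoulli functions `B̄_n^{(k)}(x) = B_n^{(k)}(⟨x⟩)`. -/
def polyBernoulliBar (k : ℤ) (n : ℕ) (x : ℝ) : ℝ := polyBernoulliPoly k n (Int.fract x)

/-- Poly-Dedekind sums `S_p^{(k)}(h,m)`. -/
def polyDedekindSum (k : ℤ) (p h m : ℕ) : ℝ :=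
  ∑ μ ∈ Finset.Ico 1 m, (μ / m : ℝ) * polyBernoulliBar k p (h * μ / m)

/-- Apostol's generalized Dedekind sums `S_p(h,m)`. -/
def genDedekindSum (p h m : ℕ) : ℝ :=
  ∑ μ ∈ Finset.Ico 1 m, (μ / m : ℝ) * bernoulliBar p (h * μ / m)

/-- The polyexponential function `Ei_k`. -/
def polyExp (k : ℤ) (x : ℝ) : ℝ :=
  ∑' n : ℕ, x ^ (n + 1) / ((n + 1 : ℝ) ^ k * (Nat.factorial n : ℝ))

/-- The sawtooth function `((x))`. -/
def sawtooth (x : ℝ) : ℝ := if Int.fract x = 0 then 0 else Int.fract x - 1 / 2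

end

section Aux
open Finset Polynomial

private lemma tel (j : ℕ) (y : ℚ) (N : ℕ) :
    (Polynomial.bernoulli (j+1)).eval (y + N) =
      (Polynomial.bernoulli (j+1)).eval y + (j+1) * ∑ t ∈ Finset.range N, (y + t)^j := by
  induction N with
  | zero => simp
  | succ N ih =>
    have h1 := Polynomial.bernoulli_eval_one_add (j+1) (y + N)
    have : y + (N+1:ℕ) = 1 + (y + N) := by push_cast; ring
    rw [this, h1, ih, sum_range_succ]
    push_cast
    ring

private lemma raabe_rat (j h : ℕ) (hh : 0 < h) (x : ℚ) :
    (h:ℚ) * (Polynomial.bernoulli j).eval x =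
      (h:ℚ)^j * ∑ ν ∈ Finset.range h, (Polynomial.bernoulli j).eval ((x + ν)/h) := by
  have hq : (h:ℚ) ≠ 0 := by positivity
  set F : ℚ[X] := (Polynomial.bernoulli (j+1)).comp (C x + C (h:ℚ) * X) with hF
  set G : ℚ[X] := C ((h:ℚ)^j) *
      ∑ ν ∈ Finset.range h, (Polynomial.bernoulli (j+1)).comp (C ((x + ν)/h) + X) with hG
  have hFe : ∀ y : ℚ, F.eval y = (Polynomial.bernoulli (j+1)).eval (x + h*y) := by
    intro y; simp [hF]
  have hGe : ∀ y : ℚ, G.eval y =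
      (h:ℚ)^j * ∑ ν ∈ Finset.range h, (Polynomial.bernoulli (j+1)).eval ((x + ν)/h + y) := by
    intro y; simp [hG, eval_finset_sum]
  have key : ∀ N : ℕ, (F - G).eval (N:ℚ) = (F - G).eval 0 := by
    intro N
    have hFN : F.eval (N:ℚ) - F.eval 0 = (j+1) * ∑ a ∈ Finset.range (h*N), (x + a)^j := by
      rw [hFe, hFe]
      have : x + (h:ℚ) * N = x + ((h*N : ℕ):ℚ) := by push_cast; ring
      rw [this, tel]
      simp only [mul_zero, add_zero]
      push_cast; ring
    have hGN : G.eval (N:ℚ) - G.eval 0 =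
        (h:ℚ)^j * ((j+1) * ∑ ν ∈ Finset.range h, ∑ t ∈ Finset.range N, ((x + ν)/h + t)^j) := by
      rw [hGe, hGe]
      rw [← mul_sub, ← Finset.sum_sub_distrib]
      congr 1
      rw [Finset.mul_sum]
      refine Finset.sum_congr rfl fun ν _ => ?_
      have := tel j ((x + ν)/h) N
      simp only [add_zero] at this ⊢
      rw [this]; ring
    have hsum : ∑ a ∈ Finset.range (h*N), (x + a)^j =
        ∑ ν ∈ Finset.range h, ∑ t ∈ Finset.range N, (h:ℚ)^j * ((x + ν)/h + t)^j := by
      have h1 : ∑ p ∈ Finset.range h ×ˢ Finset.range N, (h:ℚ)^j * ((x + ↑p.1)/h + ↑p.2)^j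
          = ∑ ν ∈ Finset.range h, ∑ t ∈ Finset.range N, (h:ℚ)^j * ((x + ↑ν)/h + ↑t)^j :=
        by rw [Finset.sum_product]
      rw [← h1]
      symm
      refine Finset.sum_nbij' (fun p => p.1 + h * p.2) (fun a => (a % h, a / h)) ?_ ?_ ?_ ?_ ?_
      · intro p hp
        simp only [Finset.mem_product, Finset.mem_range] at *
        calc p.1 + h * p.2 < h + h * p.2 := by omega
          _ ≤ h * N := by nlinarith [hp.1, hp.2]
      · intro a ha
        simp only [Finset.mem_product, Finset.mem_range] at *
        exact ⟨Nat.mod_lt _ hh, Nat.div_lt_iff_lt_mul hh |>.2 (by rwa [Nat.mul_comm] at ha)⟩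
      · intro p hp
        simp only [Finset.mem_product, Finset.mem_range] at hp
        have h1 : (p.1 + h * p.2) % h = p.1 := by
          rw [Nat.add_mul_mod_self_left]; exact Nat.mod_eq_of_lt hp.1
        have h2 : (p.1 + h * p.2) / h = p.2 := by
          rw [Nat.add_mul_div_left _ _ hh, Nat.div_eq_of_lt hp.1, zero_add]
        simp [h1, h2]
      · intro a ha; simp [Nat.mod_add_div]
      · intro p hp
        rw [← mul_pow]
        congr 1
        push_cast
        field_simp
        ring
    rw [eval_sub, eval_sub, sub_eq_sub_iff_sub_eq_sub, hFN, hGN, hsum]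
    simp only [Finset.mul_sum]
    refine Finset.sum_congr rfl fun ν _ => Finset.sum_congr rfl fun t _ => by ring
  have hconst : F - G = C ((F - G).eval 0) := by
    have hz : F - G - C ((F - G).eval 0) = 0 := by
      apply Polynomial.eq_zero_of_infinite_isRoot
      apply Set.infinite_of_injective_forall_mem (f := fun n : ℕ => (n : ℚ))
      · exact fun a b hab => Nat.cast_injective hab
      · intro n
        have kn := key n
        simp only [eval_sub] at kn
        simp only [Set.mem_setOf_eq, Polynomial.IsRoot, eval_sub, eval_C]
        linarith
    exact sub_eq_zero.mp hz
  have hder : (derivative F).eval 0 = (derivative G).eval 0 := by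
    have : derivative F - derivative G = 0 := by
      rw [← derivative_sub, hconst, derivative_C]
    have := sub_eq_zero.mp this
    rw [this]
  have e1 : (derivative F).eval 0 = (h:ℚ) * (((j:ℚ)+1) * (Polynomial.bernoulli j).eval x) := by
    rw [hF, derivative_comp, derivative_bernoulli_add_one]
    simp [eval_comp]
  have e2 : (derivative G).eval 0 = (h:ℚ)^j *
      (((j:ℚ)+1) * ∑ ν ∈ Finset.range h, (Polynomial.bernoulli j).eval ((x + ν)/h)) := by
    rw [hG, derivative_mul, derivative_C, derivative_sum]
    simp only [derivative_comp, derivative_bernoulli_add_one]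
    simp [eval_comp, eval_finset_sum, Finset.mul_sum]
  have hj1 : ((j:ℚ)+1) ≠ 0 := by positivity
  apply mul_left_cancel₀ hj1
  rw [e1, e2] at hder
  linarith [hder]

private lemma bpf_eq (j : ℕ) (y : ℝ) :
    bernoulliPolyFun j y = ((Polynomial.bernoulli j).map (algebraMap ℚ ℝ)).eval y := by
  rw [Polynomial.bernoulli, Polynomial.map_sum, Polynomial.eval_finset_sum, bernoulliPolyFun]
  refine Finset.sum_congr rfl fun i _ => ?_
  rw [Polynomial.map_monomial, Polynomial.eval_monomial, eq_ratCast]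
  push_cast
  ring

private lemma raabe_real (j h : ℕ) (hh : 0 < h) (y : ℝ) :
    (h:ℝ) * bernoulliPolyFun j y =
      (h:ℝ)^j * ∑ ν ∈ Finset.range h, bernoulliPolyFun j ((y + ν)/h) := by
  have hq : (h:ℚ) ≠ 0 := by positivity
  have hpoly : C (h:ℚ) * Polynomial.bernoulli j =
      C ((h:ℚ)^j) * ∑ ν ∈ Finset.range h,
        (Polynomial.bernoulli j).comp ((X + C (ν:ℚ)) * C (h:ℚ)⁻¹) := by
    apply Polynomial.funext
    intro r
    simp only [eval_mul, eval_C, eval_finset_sum, eval_comp, eval_add, eval_X]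
    rw [raabe_rat j h hh r]
    simp [div_eq_mul_inv]
  have := congrArg (Polynomial.map (algebraMap ℚ ℝ)) hpoly
  simp only [Polynomial.map_mul, Polynomial.map_C, Polynomial.map_sum, Polynomial.map_comp,
    Polynomial.map_add, Polynomial.map_X, Polynomial.map_pow, Polynomial.map_natCast,
    map_pow, map_natCast, map_inv₀] at this
  have hev := congrArg (Polynomial.eval y) this
  simp only [eval_mul, eval_C, eval_finset_sum, eval_comp, eval_add, eval_X,
    Polynomial.eval_natCast, Polynomial.eval_pow] at hev
  rw [bpf_eq, hev]
  congr 1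
  refine Finset.sum_congr rfl fun ν _ => ?_
  rw [bpf_eq]
  norm_num [div_eq_mul_inv]

private lemma raabe_bar (j h : ℕ) (hh : 0 < h) (x : ℝ) :
    (h:ℝ) * bernoulliBar j (h*x) =
      (h:ℝ)^j * ∑ ν ∈ Finset.range h, bernoulliBar j (x + ν/h) := by
  have hq0 : (h:ℝ) ≠ 0 := by positivity
  have hz : (h:ℤ) ≠ 0 := by exact_mod_cast Nat.pos_iff_ne_zero.mp hh
  set q : ℤ := ⌊(h:ℝ)*x⌋ with hqdef
  set r : ℝ := Int.fract ((h:ℝ)*x) with hrdef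
  have hr0 : 0 ≤ r := Int.fract_nonneg _
  have hr1 : r < 1 := Int.fract_lt_one _
  have key : ∀ ν : ℕ, ν < h →
      Int.fract (x + ν/h) = (r + ((((ν:ℤ) + q) % h : ℤ) : ℝ))/h := by
    intro ν hν
    set w : ℤ := ((ν:ℤ) + q) % h with hwdef
    set d : ℤ := ((ν:ℤ) + q) / h with hddef
    have hwd : (h:ℤ) * d + w = (ν:ℤ) + q := Int.mul_ediv_add_emod _ _
    have hw0 : 0 ≤ w := Int.emod_nonneg _ hz
    have hwh : w < h := Int.emod_lt_of_pos _ (by exact_mod_cast hh)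
    have hfl : (h:ℝ) * x = q + r := by rw [hrdef, hqdef]; exact (Int.floor_add_fract _).symm
    have hx' : x + ν/h = (d:ℝ) + (r + w)/h := by
      have hwd' : (h:ℝ) * d + w = (ν:ℝ) + q := by exact_mod_cast congrArg (Int.cast : ℤ → ℝ) hwd
      field_simp
      linarith [hfl, hwd']
    rw [hx', Int.fract_intCast_add, Int.fract_eq_self.mpr ⟨by positivity, ?_⟩]
    rw [div_lt_one (by positivity)]
    have : (w:ℝ) ≤ (h:ℝ) - 1 := by
      have : w ≤ (h:ℤ) - 1 := by omega
      exact_mod_cast this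
    linarith
  have hsum : ∑ ν ∈ Finset.range h, bernoulliBar j (x + ν/h)
      = ∑ ν ∈ Finset.range h, bernoulliPolyFun j ((r + ν)/h) := by
    refine Finset.sum_nbij' (fun ν => (((ν:ℤ) + q) % h).toNat)
      (fun ν => (((ν:ℤ) - q) % h).toNat) ?_ ?_ ?_ ?_ ?_
    · intro ν hν
      simp only [Finset.mem_range] at *
      have h1 : 0 ≤ ((ν:ℤ) + q) % h := Int.emod_nonneg _ hz
      have h2 : ((ν:ℤ) + q) % h < h := Int.emod_lt_of_pos _ (by exact_mod_cast hh)
      omega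
    · intro ν hν
      simp only [Finset.mem_range] at *
      have h1 : 0 ≤ ((ν:ℤ) - q) % h := Int.emod_nonneg _ hz
      have h2 : ((ν:ℤ) - q) % h < h := Int.emod_lt_of_pos _ (by exact_mod_cast hh)
      omega
    · intro ν hν
      beta_reduce
      simp only [Finset.mem_range] at hν
      have h1 : 0 ≤ ((ν:ℤ) + q) % h := Int.emod_nonneg _ hz
      have heq : ((((ν:ℤ) + q) % h) - q) % h = (ν:ℤ) % h := by
        rw [Int.sub_emod, Int.emod_emod_of_dvd _ dvd_rfl, ← Int.sub_emod, add_sub_cancel_right]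
      have hν' : (ν:ℤ) % h = ν := Int.emod_eq_of_lt (by positivity) (by exact_mod_cast hν)
      rw [Int.toNat_of_nonneg h1, heq, hν', Int.toNat_natCast]
    · intro ν hν
      beta_reduce
      simp only [Finset.mem_range] at hν
      have h1 : 0 ≤ ((ν:ℤ) - q) % h := Int.emod_nonneg _ hz
      have heq : ((((ν:ℤ) - q) % h) + q) % h = (ν:ℤ) % h := by
        rw [Int.add_emod, Int.emod_emod_of_dvd _ dvd_rfl, ← Int.add_emod, sub_add_cancel]
      have hν' : (ν:ℤ) % h = ν := Int.emod_eq_of_lt (by positivity) (by exact_mod_cast hν)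
      rw [Int.toNat_of_nonneg h1, heq, hν', Int.toNat_natCast]
    · intro ν hν
      simp only [Finset.mem_range] at hν
      rw [bernoulliBar, key ν hν]
      congr 2
      have h1 : 0 ≤ ((ν:ℤ) + q) % h := Int.emod_nonneg _ hz
      rw [← Int.toNat_of_nonneg h1]
      simp only [Int.toNat_natCast, Int.cast_natCast]
  rw [hsum, show (h:ℝ)*x = ((h:ℝ)*x) from rfl]
  have := raabe_real j h hh r
  rw [bernoulliBar, ← hrdef, this]

private noncomputable def cc (k : ℤ) (r : ℕ) : ℚ := polyExpCoeff k (r+1) / ((r : ℚ)+1)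

private lemma pB_rec (k : ℤ) (n : ℕ) : ((n:ℚ)+1) * polyBernoulli k n =
    polyExpCoeff k (n+1) - ∑ l ∈ Finset.range n, ((n+1).choose l : ℚ) * polyBernoulli k l := by
  rw [polyBernoulli]
  rw [Finset.sum_attach (Finset.range n) (fun l => ((n + 1).choose l : ℚ) * polyBernoulli k l)]
  field_simp

private lemma key_sum (k : ℤ) (m : ℕ) (hm : 0 < m) :
    ∑ l ∈ Finset.range m, ((m.choose l : ℚ)) *
      (∑ r ∈ Finset.range (l+1), ((l.choose r : ℚ)) * cc k r * _root_.bernoulli (l - r)) =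
    polyExpCoeff k m := by
  have step1 : ∀ l ∈ Finset.range m,
      (∑ r ∈ Finset.range (l+1), ((l.choose r : ℚ)) * cc k r * _root_.bernoulli (l - r)) =
      ∑ r ∈ Finset.range m, ((l.choose r : ℚ)) * cc k r * _root_.bernoulli (l - r) := by
    intro l hl
    refine Finset.sum_subset (Finset.range_subset_range.mpr (Finset.mem_range.mp hl)) ?_
    intro r _ hr
    have : l < r := by simp at hr ⊢; omega
    rw [Nat.choose_eq_zero_of_lt this]
    simp
  rw [Finset.sum_congr rfl (fun l hl => by rw [step1 l hl])]
  simp_rw [Finset.mul_sum]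
  rw [Finset.sum_comm]
  have step3 : ∀ r ∈ Finset.range m,
      ∑ l ∈ Finset.range m, (m.choose l : ℚ) * ((l.choose r : ℚ) * cc k r * _root_.bernoulli (l - r)) =
      (m.choose r : ℚ) * cc k r * (if m - r = 1 then 1 else 0) := by
    intro r hr
    have hrm : r < m := Finset.mem_range.mp hr
    rw [← Finset.sum_range_add_sum_Ico
      (fun l => (m.choose l : ℚ) * ((l.choose r : ℚ) * cc k r * _root_.bernoulli (l - r)))
      (le_of_lt hrm)]
    have hz : ∑ l ∈ Finset.range r,
        (m.choose l:ℚ) * ((l.choose r:ℚ) * cc k r * _root_.bernoulli (l-r)) = 0 := by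
      apply Finset.sum_eq_zero; intro l hl
      rw [Nat.choose_eq_zero_of_lt (Finset.mem_range.mp hl)]; simp
    rw [hz, zero_add, Finset.sum_Ico_eq_sum_range]
    have hterm : ∀ s ∈ Finset.range (m - r),
        (m.choose (r+s) : ℚ) * (((r+s).choose r : ℚ) * cc k r * _root_.bernoulli ((r+s) - r)) =
        (m.choose r : ℚ) * cc k r * (((m-r).choose s : ℚ) * _root_.bernoulli s) := by
      intro s hs
      have hs' : s < m - r := Finset.mem_range.mp hs
      have h1 : (r+s) - r = s := by omega
      have h2 : (m.choose (r+s)) * ((r+s).choose r) = m.choose r * (m-r).choose s := by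
        have := Nat.choose_mul (n := m) (show r ≤ r+s by omega)
        simpa using this
      have h2' : ((m.choose (r+s)) : ℚ) * (((r+s).choose r):ℚ)
          = (m.choose r : ℚ) * ((m-r).choose s : ℚ) := by exact_mod_cast h2
      rw [h1]
      calc (m.choose (r+s) : ℚ) * (((r+s).choose r : ℚ) * cc k r * _root_.bernoulli s)
          = ((m.choose (r+s) : ℚ) * ((r+s).choose r : ℚ)) * cc k r * _root_.bernoulli s := by ring
        _ = ((m.choose r : ℚ) * ((m-r).choose s : ℚ)) * cc k r * _root_.bernoulli s := by rw [h2']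
        _ = (m.choose r : ℚ) * cc k r * (((m-r).choose s : ℚ) * _root_.bernoulli s) := by ring
    rw [Finset.sum_congr rfl hterm, ← Finset.mul_sum, _root_.sum_bernoulli]
  rw [Finset.sum_congr rfl step3]
  rw [Finset.sum_eq_single (m-1)]
  · rw [if_pos (by omega : m - (m-1) = 1)]
    have hc : m.choose (m-1) = m := by
      rw [← Nat.choose_symm (by omega : m - 1 ≤ m), (by omega : m - (m-1) = 1),
        Nat.choose_one_right]
    rw [hc, mul_one, cc]
    have hm1 : (m - 1 : ℕ) + 1 = m := by omega
    have hm1' : ((m - 1 : ℕ):ℚ) + 1 = (m:ℚ) := by exact_mod_cast congrArg (Nat.cast : ℕ → ℚ) hm1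
    rw [hm1, hm1']
    rw [mul_div_cancel₀]
    positivity
  · intro r hr hne
    have : m - r ≠ 1 := by simp at hr; omega
    rw [if_neg this, mul_zero]
  · intro hmem
    exact absurd (Finset.mem_range.mpr (by omega)) hmem

private lemma pB_eq (k : ℤ) (n : ℕ) : polyBernoulli k n =
    ∑ r ∈ Finset.range (n+1), (n.choose r : ℚ) * cc k r * _root_.bernoulli (n - r) := by
  induction n using Nat.strong_induction_on with
  | _ n ih =>
    have hrec := pB_rec k n
    have hkey := key_sum k (n+1) (Nat.succ_pos n)
    rw [Finset.sum_range_succ] at hkey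
    have hsum : ∑ l ∈ Finset.range n, ((n+1).choose l : ℚ) * polyBernoulli k l
        = ∑ l ∈ Finset.range n, ((n+1).choose l : ℚ) *
          (∑ r ∈ Finset.range (l+1), (l.choose r:ℚ) * cc k r * _root_.bernoulli (l-r)) :=
      Finset.sum_congr rfl fun l hl => by rw [ih l (Finset.mem_range.mp hl)]
    rw [hsum] at hrec
    have hch : (((n+1)).choose n : ℚ) = (n:ℚ)+1 := by
      rw [Nat.choose_succ_self_right]; push_cast; ring
    rw [hch] at hkey
    have hpos : ((n:ℚ)+1) ≠ 0 := by positivity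
    apply mul_left_cancel₀ hpos
    rw [hrec]
    linarith [hkey]

private lemma pBP_eq (k : ℤ) (n : ℕ) (x : ℝ) :
    polyBernoulliPoly k n x =
      ∑ j ∈ Finset.range (n+1), (n.choose j : ℝ) * ((cc k (n-j) : ℚ) : ℝ) *
        bernoulliPolyFun j x := by
  have hcast : ∀ l, ((polyBernoulli k l : ℚ) : ℝ) =
      ∑ r ∈ Finset.range (l+1),
        (l.choose r : ℝ) * ((cc k r : ℚ):ℝ) * ((_root_.bernoulli (l-r) : ℚ):ℝ) := by
    intro l; rw [pB_eq]; push_cast; rfl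
  have lhs : polyBernoulliPoly k n x =
      ∑ p ∈ (Finset.range (n+1)).sigma (fun l => Finset.range (l+1)),
        (n.choose p.1 : ℝ) * ((p.1.choose p.2 : ℝ) * ((cc k p.2 : ℚ):ℝ) *
          ((_root_.bernoulli (p.1 - p.2) : ℚ):ℝ)) * x^(n - p.1) := by
    rw [polyBernoulliPoly]
    conv_rhs => rw [Finset.sum_sigma]
    exact Finset.sum_congr rfl fun l _ => by
      rw [hcast l, Finset.mul_sum, Finset.sum_mul]
  have rhs : ∑ j ∈ Finset.range (n+1), (n.choose j : ℝ) * ((cc k (n-j) : ℚ) : ℝ) *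
        bernoulliPolyFun j x =
      ∑ p ∈ (Finset.range (n+1)).sigma (fun j => Finset.range (j+1)),
        (n.choose p.1 : ℝ) * ((cc k (n-p.1) : ℚ):ℝ) *
          ((p.1.choose p.2:ℝ) * ((_root_.bernoulli p.2:ℚ):ℝ) * x^(p.1-p.2)) := by
    conv_rhs => rw [Finset.sum_sigma]
    exact Finset.sum_congr rfl fun j _ => by
      rw [bernoulliPolyFun, Finset.mul_sum]
  rw [lhs, rhs]
  refine Finset.sum_nbij' (fun p => ⟨n - p.2, p.1 - p.2⟩) (fun p => ⟨n - p.1 + p.2, n - p.1⟩)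
    ?_ ?_ ?_ ?_ ?_
  · intro p hp
    simp only [Finset.mem_sigma, Finset.mem_range] at *
    omega
  · intro p hp
    simp only [Finset.mem_sigma, Finset.mem_range] at *
    omega
  · intro p hp
    obtain ⟨l, r⟩ := p
    simp only [Finset.mem_sigma, Finset.mem_range] at hp
    dsimp only
    have e1 : n - (n - r) + (l - r) = l := by omega
    have e2 : n - (n - r) = r := by omega
    rw [e1, e2]
  · intro p hp
    obtain ⟨j, i⟩ := p
    simp only [Finset.mem_sigma, Finset.mem_range] at hp
    dsimp only
    have e1 : n - (n - j) = j := by omega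
    have e2 : (n - j + i) - (n - j) = i := by omega
    rw [e1, e2]
  · intro p hp
    obtain ⟨l, r⟩ := p
    simp only [Finset.mem_sigma, Finset.mem_range] at hp
    dsimp only
    obtain ⟨hl, hr⟩ := hp
    have hln : l ≤ n := by omega
    have hrl : r ≤ l := by omega
    have e1 : n - (n - r) = r := by omega
    have e2 : (n - r) - (l - r) = n - l := by omega
    have hcm : n.choose l * (l.choose r) =
        (n.choose (n - r)) * ((n - r).choose (l - r)) := by
      rw [Nat.choose_mul (n := n) hrl, Nat.choose_symm (by omega : r ≤ n)]
    have hcm2 : (n.choose l : ℝ) * (l.choose r : ℝ) =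
        ((n.choose (n - r)) : ℝ) * (((n - r).choose (l - r)) : ℝ) := by exact_mod_cast hcm
    rw [e1, e2]
    calc (n.choose l : ℝ) * ((l.choose r : ℝ) * ((cc k r : ℚ):ℝ) *
          ((_root_.bernoulli (l - r) : ℚ):ℝ)) * x^(n - l)
        = ((n.choose l : ℝ) * (l.choose r : ℝ)) * ((cc k r : ℚ):ℝ) *
          ((_root_.bernoulli (l - r) : ℚ):ℝ) * x^(n - l) := by ring
      _ = (((n.choose (n - r)) : ℝ) * (((n - r).choose (l - r)) : ℝ)) *
          ((cc k r : ℚ):ℝ) * ((_root_.bernoulli (l - r) : ℚ):ℝ) * x^(n - l) := by rw [hcm2]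
      _ = _ := by ring

private lemma cc_cast (k : ℤ) (r : ℕ) : ((cc k r : ℚ) : ℝ) =
    ∑ l ∈ Finset.Icc 1 (r+1), (stirling1 (r+1) l : ℝ) / (((r:ℕ):ℝ)+1) / ((l:ℝ)^(k-1)) := by
  rw [cc, polyExpCoeff]
  push_cast
  rw [Finset.sum_div]
  refine Finset.sum_congr rfl fun l hl => ?_
  rw [div_div, div_div, mul_comm]

private lemma zpow_helper (a : ℝ) (ha : a ≠ 0) (j p : ℕ) (hj : j ≤ p) :
    a^((j:ℤ)-1) * a^(p-j) = a^p / a := by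
  rw [← zpow_natCast a (p-j), ← zpow_add₀ ha, ← zpow_natCast a p]
  have hc : (j:ℤ) - 1 + ((p - j : ℕ):ℤ) = (p:ℤ) - 1 := by
    have : ((p - j : ℕ):ℤ) = (p:ℤ) - j := by omega
    rw [this]; ring
  rw [hc, zpow_sub₀ ha, zpow_one]

private lemma raabe_div (j h : ℕ) (hh : 0 < h) (x : ℝ) :
    ∑ ν ∈ Finset.range h, bernoulliBar j (x + ν/h) =
      (h:ℝ)^((1:ℤ)-j) * bernoulliBar j (h*x) := by
  have h0 : (h:ℝ) ≠ 0 := by positivity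
  have hp : (h:ℝ)^(j:ℕ) ≠ 0 := by positivity
  have := raabe_bar j h hh x
  have hsplit : (h:ℝ)^((1:ℤ)-j) = (h:ℝ) / (h:ℝ)^(j:ℕ) := by
    rw [zpow_sub₀ h0, zpow_one, zpow_natCast]
  rw [hsplit, div_mul_eq_mul_div, eq_div_iff hp]
  linear_combination -this

private lemma recip_j (h m p j : ℕ) (hh : 0 < h) (hm : 0 < m) (hj : j ≤ p) :
    ∑ μ ∈ Finset.range m, ∑ ν ∈ Finset.range h,
      ((m:ℝ)*(h:ℝ))^((j:ℤ)-1) * ((μ:ℝ)*(h:ℝ)*(m:ℝ)^(p-j) + (m:ℝ)*(ν:ℝ)*(h:ℝ)^(p-j)) *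
        bernoulliBar j ((ν:ℝ)/(h:ℝ) + (μ:ℝ)/(m:ℝ))
    = (h:ℝ)*(m:ℝ)^p * ∑ μ ∈ Finset.range m, ((μ:ℝ)/(m:ℝ)) *
        bernoulliBar j ((h:ℝ)*(μ:ℝ)/(m:ℝ))
    + (m:ℝ)*(h:ℝ)^p * ∑ ν ∈ Finset.range h, ((ν:ℝ)/(h:ℝ)) *
        bernoulliBar j ((m:ℝ)*(ν:ℝ)/(h:ℝ)) := by
  have hm0 : (m:ℝ) ≠ 0 := by positivity
  have hh0 : (h:ℝ) ≠ 0 := by positivity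
  have split : ∀ μ ν : ℕ,
      ((m:ℝ)*(h:ℝ))^((j:ℤ)-1) * ((μ:ℝ)*(h:ℝ)*(m:ℝ)^(p-j) + (m:ℝ)*(ν:ℝ)*(h:ℝ)^(p-j)) *
        bernoulliBar j ((ν:ℝ)/(h:ℝ) + (μ:ℝ)/(m:ℝ))
      = ((m:ℝ)*(h:ℝ))^((j:ℤ)-1) * ((μ:ℝ)*(h:ℝ)*(m:ℝ)^(p-j)) *
          bernoulliBar j ((ν:ℝ)/(h:ℝ) + (μ:ℝ)/(m:ℝ))
        + ((m:ℝ)*(h:ℝ))^((j:ℤ)-1) * ((m:ℝ)*(ν:ℝ)*(h:ℝ)^(p-j)) *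
          bernoulliBar j ((ν:ℝ)/(h:ℝ) + (μ:ℝ)/(m:ℝ)) := by
    intro μ ν; ring
  simp_rw [split, Finset.sum_add_distrib]
  congr 1
  · -- first part
    have inner : ∀ μ : ℕ, ∑ ν ∈ Finset.range h,
        ((m:ℝ)*(h:ℝ))^((j:ℤ)-1) * ((μ:ℝ)*(h:ℝ)*(m:ℝ)^(p-j)) *
          bernoulliBar j ((ν:ℝ)/(h:ℝ) + (μ:ℝ)/(m:ℝ))
        = (h:ℝ)*(m:ℝ)^p * (((μ:ℝ)/(m:ℝ)) * bernoulliBar j ((h:ℝ)*(μ:ℝ)/(m:ℝ))) := by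
      intro μ
      have hc : ∀ ν : ℕ, (ν:ℝ)/(h:ℝ) + (μ:ℝ)/(m:ℝ) = (μ:ℝ)/(m:ℝ) + (ν:ℝ)/(h:ℝ) := by
        intro ν; ring
      calc ∑ ν ∈ Finset.range h,
            ((m:ℝ)*(h:ℝ))^((j:ℤ)-1) * ((μ:ℝ)*(h:ℝ)*(m:ℝ)^(p-j)) *
              bernoulliBar j ((ν:ℝ)/(h:ℝ) + (μ:ℝ)/(m:ℝ))
          = ((m:ℝ)*(h:ℝ))^((j:ℤ)-1) * ((μ:ℝ)*(h:ℝ)*(m:ℝ)^(p-j)) *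
              ∑ ν ∈ Finset.range h, bernoulliBar j ((μ:ℝ)/(m:ℝ) + (ν:ℝ)/(h:ℝ)) := by
            rw [Finset.mul_sum]
            exact Finset.sum_congr rfl fun ν _ => by rw [hc ν]
        _ = ((m:ℝ)*(h:ℝ))^((j:ℤ)-1) * ((μ:ℝ)*(h:ℝ)*(m:ℝ)^(p-j)) *
              ((h:ℝ)^((1:ℤ)-j) * bernoulliBar j ((h:ℝ)*((μ:ℝ)/(m:ℝ)))) := by
            rw [raabe_div j h hh]
        _ = (h:ℝ)*(m:ℝ)^p * (((μ:ℝ)/(m:ℝ)) * bernoulliBar j ((h:ℝ)*(μ:ℝ)/(m:ℝ))) := by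
            rw [show (h:ℝ)*((μ:ℝ)/(m:ℝ)) = (h:ℝ)*(μ:ℝ)/(m:ℝ) from by ring]
            rw [mul_zpow]
            have e1 : (m:ℝ)^((j:ℤ)-1) * (m:ℝ)^(p-j) = (m:ℝ)^p / m := zpow_helper _ hm0 _ _ hj
            have e2 : (h:ℝ)^((j:ℤ)-1) * (h:ℝ)^((1:ℤ)-j) = 1 := by
              rw [← zpow_add₀ hh0]; norm_num
            calc (m:ℝ)^((j:ℤ)-1) * (h:ℝ)^((j:ℤ)-1) * ((μ:ℝ)*(h:ℝ)*(m:ℝ)^(p-j)) *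
                  ((h:ℝ)^((1:ℤ)-j) * bernoulliBar j ((h:ℝ)*(μ:ℝ)/(m:ℝ)))
                = ((m:ℝ)^((j:ℤ)-1) * (m:ℝ)^(p-j)) * ((h:ℝ)^((j:ℤ)-1) * (h:ℝ)^((1:ℤ)-j)) *
                  (μ:ℝ) * (h:ℝ) * bernoulliBar j ((h:ℝ)*(μ:ℝ)/(m:ℝ)) := by ring
              _ = ((m:ℝ)^p / m) * 1 * (μ:ℝ) * (h:ℝ) *
                  bernoulliBar j ((h:ℝ)*(μ:ℝ)/(m:ℝ)) := by rw [e1, e2]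
              _ = _ := by ring
    rw [Finset.sum_congr rfl fun μ _ => inner μ, ← Finset.mul_sum]
  · -- second part
    rw [Finset.sum_comm]
    have inner : ∀ ν : ℕ, ∑ μ ∈ Finset.range m,
        ((m:ℝ)*(h:ℝ))^((j:ℤ)-1) * ((m:ℝ)*(ν:ℝ)*(h:ℝ)^(p-j)) *
          bernoulliBar j ((ν:ℝ)/(h:ℝ) + (μ:ℝ)/(m:ℝ))
        = (m:ℝ)*(h:ℝ)^p * (((ν:ℝ)/(h:ℝ)) * bernoulliBar j ((m:ℝ)*(ν:ℝ)/(h:ℝ))) := by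
      intro ν
      calc ∑ μ ∈ Finset.range m,
            ((m:ℝ)*(h:ℝ))^((j:ℤ)-1) * ((m:ℝ)*(ν:ℝ)*(h:ℝ)^(p-j)) *
              bernoulliBar j ((ν:ℝ)/(h:ℝ) + (μ:ℝ)/(m:ℝ))
          = ((m:ℝ)*(h:ℝ))^((j:ℤ)-1) * ((m:ℝ)*(ν:ℝ)*(h:ℝ)^(p-j)) *
              ∑ μ ∈ Finset.range m, bernoulliBar j ((ν:ℝ)/(h:ℝ) + (μ:ℝ)/(m:ℝ)) := by
            rw [Finset.mul_sum]
        _ = ((m:ℝ)*(h:ℝ))^((j:ℤ)-1) * ((m:ℝ)*(ν:ℝ)*(h:ℝ)^(p-j)) *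
              ((m:ℝ)^((1:ℤ)-j) * bernoulliBar j ((m:ℝ)*((ν:ℝ)/(h:ℝ)))) := by
            rw [raabe_div j m hm]
        _ = (m:ℝ)*(h:ℝ)^p * (((ν:ℝ)/(h:ℝ)) * bernoulliBar j ((m:ℝ)*(ν:ℝ)/(h:ℝ))) := by
            rw [show (m:ℝ)*((ν:ℝ)/(h:ℝ)) = (m:ℝ)*(ν:ℝ)/(h:ℝ) from by ring]
            rw [mul_zpow]
            have e1 : (h:ℝ)^((j:ℤ)-1) * (h:ℝ)^(p-j) = (h:ℝ)^p / h := zpow_helper _ hh0 _ _ hj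
            have e2 : (m:ℝ)^((j:ℤ)-1) * (m:ℝ)^((1:ℤ)-j) = 1 := by
              rw [← zpow_add₀ hm0]; norm_num
            calc (m:ℝ)^((j:ℤ)-1) * (h:ℝ)^((j:ℤ)-1) * ((m:ℝ)*(ν:ℝ)*(h:ℝ)^(p-j)) *
                  ((m:ℝ)^((1:ℤ)-j) * bernoulliBar j ((m:ℝ)*(ν:ℝ)/(h:ℝ)))
                = ((h:ℝ)^((j:ℤ)-1) * (h:ℝ)^(p-j)) * ((m:ℝ)^((j:ℤ)-1) * (m:ℝ)^((1:ℤ)-j)) *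
                  (ν:ℝ) * (m:ℝ) * bernoulliBar j ((m:ℝ)*(ν:ℝ)/(h:ℝ)) := by ring
              _ = ((h:ℝ)^p / h) * 1 * (ν:ℝ) * (m:ℝ) *
                  bernoulliBar j ((m:ℝ)*(ν:ℝ)/(h:ℝ)) := by rw [e1, e2]
              _ = _ := by ring
    rw [Finset.sum_congr rfl fun ν _ => inner ν, ← Finset.mul_sum]

private lemma pBB_eq (k : ℤ) (n : ℕ) (x : ℝ) :
    polyBernoulliBar k n x =
      ∑ j ∈ Finset.range (n+1), (n.choose j : ℝ) * ((cc k (n-j) : ℚ) : ℝ) *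
        bernoulliBar j x := by
  rw [polyBernoulliBar, pBP_eq]
  rfl

private lemma eS (k : ℤ) (p h' m' : ℕ) (hm' : 0 < m') : polyDedekindSum k p h' m' =
    ∑ j ∈ Finset.range (p+1), (p.choose j:ℝ) * ((cc k (p-j):ℚ):ℝ) *
      ∑ μ ∈ Finset.range m', ((μ:ℝ)/(m':ℝ)) * bernoulliBar j ((h':ℝ)*(μ:ℝ)/(m':ℝ)) := by
  rw [polyDedekindSum]
  have h0 : ∑ μ ∈ Finset.range m', ((μ:ℝ)/(m':ℝ)) * polyBernoulliBar k p ((h':ℝ)*(μ:ℝ)/(m':ℝ))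
      = ∑ μ ∈ Finset.Ico 1 m', ((μ:ℝ)/(m':ℝ)) * polyBernoulliBar k p ((h':ℝ)*(μ:ℝ)/(m':ℝ)) := by
    rw [Finset.range_eq_Ico, Finset.sum_eq_sum_Ico_succ_bot hm']
    simp
  rw [← h0]
  have h1 : ∀ μ : ℕ, ((μ:ℝ)/(m':ℝ)) * polyBernoulliBar k p ((h':ℝ)*(μ:ℝ)/(m':ℝ))
      = ∑ j ∈ Finset.range (p+1), (p.choose j:ℝ) * ((cc k (p-j):ℚ):ℝ) *
          (((μ:ℝ)/(m':ℝ)) * bernoulliBar j ((h':ℝ)*(μ:ℝ)/(m':ℝ))) := by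
    intro μ
    rw [pBB_eq, Finset.mul_sum]
    exact Finset.sum_congr rfl fun j _ => by ring
  rw [Finset.sum_congr rfl fun μ _ => h1 μ, Finset.sum_comm]
  exact Finset.sum_congr rfl fun j _ => by rw [← Finset.mul_sum]

end Aux

/-- Reciprocity for poly-Dedekind sums. -/
theorem polyDedekind_reciprocity (h m p : ℕ) (hh : 0 < h) (hm : 0 < m)
    (hcop : Nat.Coprime h m) (hp : 0 < p) (k : ℤ) :
    (h : ℝ) * (m : ℝ) ^ p * polyDedekindSum k p h m +
        (m : ℝ) * (h : ℝ) ^ p * polyDedekindSum k p m h =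
      ∑ μ ∈ Finset.range m, ∑ j ∈ Finset.range (p + 1), ∑ ν ∈ Finset.range h,
        ∑ l ∈ Finset.Icc 1 (p - j + 1),
          ((m : ℝ) * h) ^ ((j : ℤ) - 1) * (p.choose j : ℝ) * (stirling1 (p - j + 1) l : ℝ) /
              (((p - j : ℕ) + 1) * (l : ℝ) ^ (k - 1)) *
            ((μ : ℝ) * h * (m : ℝ) ^ (p - j) + (m : ℝ) * ν * (h : ℝ) ^ (p - j)) *
            bernoulliBar j ((ν : ℝ) / h + (μ : ℝ) / m) := by
  have hjle : ∀ j ∈ Finset.range (p+1), j ≤ p := fun j hj => Nat.lt_succ_iff.mp (Finset.mem_range.mp hj)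
  have stepA : ∀ μ ∈ Finset.range m, ∀ j ∈ Finset.range (p+1), ∀ ν ∈ Finset.range h,
      (∑ l ∈ Finset.Icc 1 (p - j + 1),
          ((m : ℝ) * h) ^ ((j : ℤ) - 1) * (p.choose j : ℝ) * (stirling1 (p - j + 1) l : ℝ) /
              (((p - j : ℕ) + 1) * (l : ℝ) ^ (k - 1)) *
            ((μ : ℝ) * h * (m : ℝ) ^ (p - j) + (m : ℝ) * ν * (h : ℝ) ^ (p - j)) *
            bernoulliBar j ((ν : ℝ) / h + (μ : ℝ) / m))
      = (p.choose j : ℝ) * ((cc k (p-j) : ℚ):ℝ) *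
          (((m:ℝ)*(h:ℝ))^((j:ℤ)-1) * ((μ:ℝ)*(h:ℝ)*(m:ℝ)^(p-j) + (m:ℝ)*(ν:ℝ)*(h:ℝ)^(p-j)) *
            bernoulliBar j ((ν:ℝ)/(h:ℝ) + (μ:ℝ)/(m:ℝ))) := by
    intro μ _ j _ ν _
    have hper : ∀ l : ℕ,
        ((m : ℝ) * h) ^ ((j : ℤ) - 1) * (p.choose j : ℝ) * (stirling1 (p - j + 1) l : ℝ) /
              (((p - j : ℕ) + 1) * (l : ℝ) ^ (k - 1)) *
            ((μ : ℝ) * h * (m : ℝ) ^ (p - j) + (m : ℝ) * ν * (h : ℝ) ^ (p - j)) *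
            bernoulliBar j ((ν : ℝ) / h + (μ : ℝ) / m)
        = ((stirling1 (p - j + 1) l : ℝ) / (((p - j : ℕ):ℝ)+1) / ((l:ℝ)^(k-1))) *
          ((p.choose j : ℝ) *
            (((m:ℝ)*(h:ℝ))^((j:ℤ)-1) * ((μ:ℝ)*(h:ℝ)*(m:ℝ)^(p-j) + (m:ℝ)*(ν:ℝ)*(h:ℝ)^(p-j)) *
              bernoulliBar j ((ν:ℝ)/(h:ℝ) + (μ:ℝ)/(m:ℝ)))) := by
      intro l
      field_simp
    rw [Finset.sum_congr rfl fun l _ => hper l, ← Finset.sum_mul, ← cc_cast]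
    ring
  rw [Finset.sum_congr rfl (fun μ hμ => Finset.sum_congr rfl (fun j hj =>
    Finset.sum_congr rfl (fun ν hν => stepA μ hμ j hj ν hν)))]
  rw [Finset.sum_comm]
  have hpull : ∀ j ∈ Finset.range (p+1),
      (∑ μ ∈ Finset.range m, ∑ ν ∈ Finset.range h,
        (p.choose j : ℝ) * ((cc k (p-j) : ℚ):ℝ) *
          (((m:ℝ)*(h:ℝ))^((j:ℤ)-1) * ((μ:ℝ)*(h:ℝ)*(m:ℝ)^(p-j) + (m:ℝ)*(ν:ℝ)*(h:ℝ)^(p-j)) *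
            bernoulliBar j ((ν:ℝ)/(h:ℝ) + (μ:ℝ)/(m:ℝ))))
      = (p.choose j : ℝ) * ((cc k (p-j) : ℚ):ℝ) *
          ((h:ℝ)*(m:ℝ)^p * ∑ μ ∈ Finset.range m, ((μ:ℝ)/(m:ℝ)) *
              bernoulliBar j ((h:ℝ)*(μ:ℝ)/(m:ℝ))
          + (m:ℝ)*(h:ℝ)^p * ∑ ν ∈ Finset.range h, ((ν:ℝ)/(h:ℝ)) *
              bernoulliBar j ((m:ℝ)*(ν:ℝ)/(h:ℝ))) := by
    intro j hj
    rw [← recip_j h m p j hh hm (hjle j hj)]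
    rw [Finset.mul_sum]
    exact Finset.sum_congr rfl fun μ _ => by rw [Finset.mul_sum]
  rw [Finset.sum_congr rfl hpull]
  rw [eS k p h m hm, eS k p m h hh, Finset.mul_sum, Finset.mul_sum,
    ← Finset.sum_add_distrib]
  exact Finset.sum_congr rfl fun j _ => by ring
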